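/- Every divisible commutative monoid D is ℤ⁺-i-injective: for every subtractive submonoid I of (ℤ⁺, +) (i.e., a subtractive ideal, which is of the form kℤ⁺) and every monoid homomorphism g: I → D, there exists a monoid homomorphism h: ℤ⁺ → D extending g. -/
import Mathlib


/-- Every divisible commutative monoid is `ℤ⁺`-`i`-injective: homomorphisms from a
subtractive submonoid of `ℕ` extend to all of `ℕ`. -/
theorem stmt_16 {D : Type*} [AddCommMonoid D]
    (hdiv : ∀ n : ℕ, n ≠ 0 → ∀ d : D, ∃ d' : D, n • d' = d)
    (I : AddSubmonoid ℕ) (hI : ∀ x i : ℕ, i ∈ I → x + i ∈ I → x ∈ I)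
    (g : I →+ D) :
    ∃ h : ℕ →+ D, ∀ x : I, h (x : ℕ) = g x := by
  by_cases htriv : ∀ x : ℕ, x ∈ I → x = 0
  · refine ⟨0, fun x => ?_⟩
    have hx0 : (x : ℕ) = 0 := htriv x x.2
    have : x = 0 := Subtype.ext hx0
    simp [this]
  · push_neg at htriv
    obtain ⟨m, hmI, hm0⟩ := htriv
    -- k : least positive element of I
    set S : Set ℕ := {n | n ∈ I ∧ n ≠ 0} with hS
    have hSne : S.Nonempty := ⟨m, hmI, hm0⟩
    set k : ℕ := sInf S with hk
    have hkS : k ∈ S := Nat.sInf_mem hSne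
    obtain ⟨hkI, hk0⟩ := hkS
    -- every element of I is a multiple of k
    have hdvd : ∀ x : ℕ, x ∈ I → k ∣ x := by
      intro x
      induction x using Nat.strong_induction_on with
      | _ x ih =>
        intro hx
        rcases Nat.eq_zero_or_pos x with h0 | hpos
        · simp [h0]
        · rcases le_or_gt k x with hle | hlt
          · obtain ⟨y, hy⟩ := Nat.exists_eq_add_of_le hle
            have hyI : y ∈ I := by
              apply hI y k hkI
              rw [add_comm]; rwa [← hy]
            have hylt : y < x := by omega
            obtain ⟨c, hc⟩ := ih y hylt hyI
            exact ⟨c + 1, by rw [hy, hc]; ring⟩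
          · exfalso
            have : k ≤ x := Nat.sInf_le ⟨hx, hpos.ne'⟩
            omega
    obtain ⟨d', hd'⟩ := hdiv k hk0 (g ⟨k, hkI⟩)
    refine ⟨multiplesHom D d', fun x => ?_⟩
    obtain ⟨c, hc⟩ := hdvd x x.2
    have hx : x = c • (⟨k, hkI⟩ : I) := by
      ext
      simp [hc, mul_comm]
    rw [hx, map_nsmul]
    show (c * k) • d' = c • g ⟨k, hkI⟩
    rw [mul_smul, hd']
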